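/- Let {G_i}_{i≥0} and {H_i}_{i≥0} be group chains in G with G_0 = H_0 = G, and let G_∞ and H_∞ be their inverse limits. Then {G_i} and {H_i} are conjugate equivalent if and only if there exists a homeomorphism τ : G_∞ → H_∞ which is equivariant with respect to the G-actions on G_∞ and H_∞. -/

import Mathlib

namespace CantorChains

variable {G : Type*} [Group G]

/-- The map between left coset spaces induced by an inclusion of subgroups. -/
def cosetMap {H K : Subgroup G} (h : H ≤ K) : G ⧸ H → G ⧸ K :=
  Quotient.map' id fun a b hab => by
    rw [QuotientGroup.leftRel_apply] at hab ⊢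
    exact h hab

@[simp] lemma cosetMap_mk {H K : Subgroup G} (h : H ≤ K) (a : G) :
    cosetMap h (QuotientGroup.mk a) = QuotientGroup.mk a := rfl

instance (H : Subgroup G) : TopologicalSpace (G ⧸ H) := ⊥
instance (H : Subgroup G) : DiscreteTopology (G ⧸ H) := ⟨rfl⟩

lemma cosetMap_smul {H K : Subgroup G} (h : H ≤ K) (g : G) (q : G ⧸ H) :
    cosetMap h (g • q) = g • cosetMap h q := by
  induction q using Quotient.inductionOn' with
  | h a => rfl

/-- The inverse limit of the coset spaces of a (nested) family of subgroups. -/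
def InvLim (V : ℕ → Subgroup G) : Type _ :=
  {u : ∀ i, G ⧸ V i // ∀ i j, i ≤ j → ∀ hle : V j ≤ V i, cosetMap hle (u j) = u i}

instance (V : ℕ → Subgroup G) : TopologicalSpace (InvLim V) :=
  instTopologicalSpaceSubtype

/-- The natural left `G`-action on the inverse limit. -/
instance (V : ℕ → Subgroup G) : MulAction G (InvLim V) where
  smul g u := ⟨fun i => g • u.1 i, fun i j hij hle => by
    rw [cosetMap_smul, u.2 i j hij hle]⟩
  one_smul u := Subtype.ext (funext fun i => one_smul _ _)
  mul_smul a b u := Subtype.ext (funext fun i => mul_smul a b (u.1 i))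

lemma smul_coord (V : ℕ → Subgroup G) (g : G) (u : InvLim V) (i : ℕ) :
    (g • u).1 i = g • u.1 i := rfl

/-- The canonical basepoint `(eG_i)` of the inverse limit. -/
def basepoint (V : ℕ → Subgroup G) : InvLim V :=
  ⟨fun _ => QuotientGroup.mk 1, fun _ _ _ _ => rfl⟩

/-- A group chain: a properly descending chain of finite index subgroups,
starting at the full group. -/
structure GroupChain (G : Type*) [Group G] where
  sub : ℕ → Subgroup G
  sub_zero : sub 0 = ⊤
  sub_lt : ∀ i, sub (i + 1) < sub i
  finiteIndex : ∀ i, (sub i).FiniteIndex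

lemma GroupChain.antitone (C : GroupChain G) : Antitone C.sub :=
  antitone_nat_of_succ_le fun i => (C.sub_lt i).le

/-- Equivalence of group chains: some interleaving of subsequences is again a chain. -/
def ChainEquiv (Gc Hc : GroupChain G) : Prop :=
  ∃ (Kc : GroupChain G) (a b : ℕ → ℕ), StrictMono a ∧ StrictMono b ∧
    (∀ k, Kc.sub (2 * k) = Gc.sub (a k)) ∧ (∀ k, Kc.sub (2 * k + 1) = Hc.sub (b k))

/-- The conjugate `g H g⁻¹` of a subgroup. -/
def conjSubgroup (g : G) (H : Subgroup G) : Subgroup G :=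
  H.map (MulAut.conj g).toMonoidHom

/-- Conjugate equivalence of group chains. -/
def ChainConjEquiv (Gc Hc : GroupChain G) : Prop :=
  ∃ g : ℕ → G,
    (∀ i j, i ≤ j → (QuotientGroup.mk (g j) : G ⧸ Gc.sub i) = QuotientGroup.mk (g i)) ∧
    ∃ (Kc : GroupChain G) (a b : ℕ → ℕ), StrictMono a ∧ StrictMono b ∧
      (∀ k, Kc.sub (2 * k) = conjSubgroup (g (a k)) (Gc.sub (a k))) ∧
      (∀ k, Kc.sub (2 * k + 1) = Hc.sub (b k))

lemma cosetMap_mul {N M : Subgroup G} [N.Normal] [M.Normal] (h : N ≤ M) (q r : G ⧸ N) :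
    cosetMap h (q * r) = cosetMap h q * cosetMap h r := by
  induction q using Quotient.inductionOn' with
  | h a =>
    induction r using Quotient.inductionOn' with
    | h b => rfl

lemma cosetMap_inv {N M : Subgroup G} [N.Normal] [M.Normal] (h : N ≤ M) (q : G ⧸ N) :
    cosetMap h q⁻¹ = (cosetMap h q)⁻¹ := by
  induction q using Quotient.inductionOn' with
  | h a => rfl

/-- The inverse limit of the quotient groups `A ⧸ N i`, as a subgroup of the product. -/
def quotLim {A : Type*} [Group A] (N : ℕ → Subgroup A) [∀ i, (N i).Normal] :
    Subgroup (∀ i, A ⧸ N i) where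
  carrier := {u | ∀ i j, i ≤ j → ∀ hle : N j ≤ N i, cosetMap hle (u j) = u i}
  one_mem' := fun _ _ _ _ => rfl
  mul_mem' := fun {a b} ha hb i j hij hle => by
    show cosetMap hle (a j * b j) = a i * b i
    rw [cosetMap_mul, ha i j hij hle, hb i j hij hle]
  inv_mem' := fun {a} ha i j hij hle => by
    show cosetMap hle (a j)⁻¹ = (a i)⁻¹
    rw [cosetMap_inv, ha i j hij hle]

variable (V : ℕ → Subgroup G)

/-- The limit core `C_∞ = lim← G ⧸ C_i` of a chain of subgroups. -/
def limitCore : Subgroup (∀ i, G ⧸ (V i).normalCore) :=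
  quotLim fun i => (V i).normalCore

/-- The discriminant group `D_x = lim← G_i ⧸ C_i` of a chain of subgroups. -/
def discriminant : Subgroup (∀ i, G ⧸ (V i).normalCore) where
  carrier := {u | u ∈ limitCore V ∧ ∀ i, ∃ g ∈ V i, QuotientGroup.mk g = u i}
  one_mem' := ⟨(limitCore V).one_mem, fun i => ⟨1, (V i).one_mem, rfl⟩⟩
  mul_mem' := fun {a b} ha hb => ⟨mul_mem ha.1 hb.1, fun i => by
    obtain ⟨g, hg, hga⟩ := ha.2 i
    obtain ⟨h, hh, hhb⟩ := hb.2 i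
    exact ⟨g * h, mul_mem hg hh, by rw [Pi.mul_apply, ← hga, ← hhb]; rfl⟩⟩
  inv_mem' := fun {a} ha => ⟨inv_mem ha.1, fun i => by
    obtain ⟨g, hg, hga⟩ := ha.2 i
    exact ⟨g⁻¹, inv_mem hg, by rw [Pi.inv_apply, ← hga]; rfl⟩⟩

lemma discriminant_le_limitCore : discriminant V ≤ limitCore V := fun _ hu => hu.1

/-- The natural homomorphism `ι : G → ∏ G ⧸ C_i`. -/
def iotaPi : G →* ∀ i, G ⧸ (V i).normalCore :=
  MonoidHom.mk' (fun g i => QuotientGroup.mk g) fun _ _ => rfl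

lemma iotaPi_mem_limitCore (g : G) : iotaPi V g ∈ limitCore V :=
  fun _ _ _ _ => rfl

/-- The natural homomorphism `ι : G → C_∞` into the limit core. -/
def iotaC : G →* ↥(limitCore V) :=
  (iotaPi V).codRestrict _ (iotaPi_mem_limitCore V)

end CantorChains

namespace CantorChains

variable {G : Type*} [Group G]

lemma mk_eq_mk_iff' {H : Subgroup G} {a b : G} :
    (QuotientGroup.mk a : G ⧸ H) = QuotientGroup.mk b ↔ a⁻¹ * b ∈ H :=
  QuotientGroup.eq

lemma cosetMap_comp {A B C : Subgroup G} (h1 : A ≤ B) (h2 : B ≤ C) (q : G ⧸ A) :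
    cosetMap h2 (cosetMap h1 q) = cosetMap (h1.trans h2) q := by
  induction q using Quotient.inductionOn' with
  | h a => rfl

lemma smul_mk' (g a : G) (H : Subgroup G) :
    g • (QuotientGroup.mk a : G ⧸ H) = QuotientGroup.mk (g * a) := rfl

lemma mem_conjSubgroup {g a : G} {H : Subgroup G} :
    a ∈ conjSubgroup g H ↔ g⁻¹ * a * g ∈ H := by
  constructor
  · rintro ⟨h, hh, rfl⟩
    have : g⁻¹ * (g * h * g⁻¹) * g = h := by group
    simpa [MulAut.conj_apply, this] using hh
  · intro h
    refine ⟨g⁻¹ * a * g, h, ?_⟩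
    simp only [MulEquiv.coe_toMonoidHom, MulAut.conj_apply]
    group


/-- Existence of a `G`-equivariant homeomorphism between two inverse limits. -/
def EqvHomeo (V W : ℕ → Subgroup G) : Prop :=
  ∃ τ : InvLim V ≃ₜ InvLim W, ∀ (g : G) (u : InvLim V), τ (g • u) = g • τ u

lemma EqvHomeo.refl (V : ℕ → Subgroup G) : EqvHomeo V V :=
  ⟨Homeomorph.refl _, fun _ _ => rfl⟩

lemma EqvHomeo.symm {V W : ℕ → Subgroup G} (h : EqvHomeo V W) : EqvHomeo W V := by
  obtain ⟨τ, hτ⟩ := h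
  refine ⟨τ.symm, fun g v => τ.injective ?_⟩
  rw [Homeomorph.apply_symm_apply, hτ, Homeomorph.apply_symm_apply]

lemma EqvHomeo.trans {V W X : ℕ → Subgroup G} (h1 : EqvHomeo V W) (h2 : EqvHomeo W X) :
    EqvHomeo V X := by
  obtain ⟨τ1, hτ1⟩ := h1
  obtain ⟨τ2, hτ2⟩ := h2
  exact ⟨τ1.trans τ2, fun g u => by simp [Homeomorph.trans_apply, hτ1, hτ2]⟩

lemma eqvHomeo_congr {V W : ℕ → Subgroup G} (h : ∀ i, V i = W i) : EqvHomeo V W := by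
  have : V = W := funext h
  subst this
  exact EqvHomeo.refl V

/-- Coordinatewise-defined maps between inverse limits are continuous. -/
lemma continuous_invLim {V W : ℕ → Subgroup G} (f : InvLim V → InvLim W) (c : ℕ → ℕ)
    (F : ∀ i, G ⧸ V (c i) → G ⧸ W i)
    (hf : ∀ u i, (f u).1 i = F i (u.1 (c i))) : Continuous f := by
  refine continuous_induced_rng.2 ?_
  apply continuous_pi
  intro i
  have : (fun u : InvLim V => (f u).1 i) = (fun u : InvLim V => F i (u.1 (c i))) :=
    funext fun u => hf u i
  show Continuous fun u : InvLim V => (f u).1 i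
  rw [this]
  have h1 : Continuous fun u : InvLim V => u.1 (c i) :=
    (continuous_apply (c i)).comp continuous_subtype_val
  exact continuous_of_discreteTopology.comp h1


lemma conj_antitone (V : ℕ → Subgroup G) (hV : Antitone V) (g : ℕ → G)
    (hcoh : ∀ i j, i ≤ j → (QuotientGroup.mk (g j) : G ⧸ V i) = QuotientGroup.mk (g i)) :
    Antitone (fun i => conjSubgroup (g i) (V i)) := by
  intro i j hij a ha
  simp only [mem_conjSubgroup] at ha ⊢
  have hc : (g j)⁻¹ * g i ∈ V i := mk_eq_mk_iff'.mp (hcoh i j hij)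
  have hc' : (g i)⁻¹ * g j ∈ V i := by
    have := inv_mem hc
    simpa [mul_inv_rev] using this
  have h2 : (g j)⁻¹ * a * g j ∈ V i := hV hij ha
  have hre : (g i)⁻¹ * a * g i
      = ((g i)⁻¹ * g j) * ((g j)⁻¹ * a * g j) * ((g j)⁻¹ * g i) := by group
  rw [hre]
  exact mul_mem (mul_mem hc' h2) hc

lemma eqvHomeo_conj (V : ℕ → Subgroup G) (hV : Antitone V) (g : ℕ → G)
    (hcoh : ∀ i j, i ≤ j → (QuotientGroup.mk (g j) : G ⧸ V i) = QuotientGroup.mk (g i)) :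
    EqvHomeo V (fun i => conjSubgroup (g i) (V i)) := by
  have hP : Antitone (fun i => conjSubgroup (g i) (V i)) := conj_antitone V hV g hcoh
  have hc : ∀ i j, i ≤ j → (g j)⁻¹ * g i ∈ V i := fun i j hij =>
    mk_eq_mk_iff'.mp (hcoh i j hij)
  have hc' : ∀ i j, i ≤ j → (g i)⁻¹ * g j ∈ V i := fun i j hij => by
    have := inv_mem (hc i j hij)
    simpa [mul_inv_rev] using this
  let φ : ∀ i, G ⧸ V i → G ⧸ conjSubgroup (g i) (V i) := fun i =>
    Quotient.map' (fun h => h * (g i)⁻¹) (fun x y hxy => by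
      rw [QuotientGroup.leftRel_apply] at hxy ⊢
      have hre : (g i)⁻¹ * ((x * (g i)⁻¹)⁻¹ * (y * (g i)⁻¹)) * g i = x⁻¹ * y := by group
      rw [mem_conjSubgroup, hre]
      exact hxy)
  let ψ : ∀ i, G ⧸ conjSubgroup (g i) (V i) → G ⧸ V i := fun i =>
    Quotient.map' (fun h => h * g i) (fun x y hxy => by
      rw [QuotientGroup.leftRel_apply] at hxy ⊢
      rw [mem_conjSubgroup] at hxy
      have hre : (x * g i)⁻¹ * (y * g i) = (g i)⁻¹ * (x⁻¹ * y) * g i := by group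
      rw [hre]
      exact hxy)
  have φmk : ∀ i (x : G), φ i (QuotientGroup.mk x) = QuotientGroup.mk (x * (g i)⁻¹) :=
    fun _ _ => rfl
  have ψmk : ∀ i (x : G), ψ i (QuotientGroup.mk x) = QuotientGroup.mk (x * g i) :=
    fun _ _ => rfl
  let f : InvLim V → InvLim (fun i => conjSubgroup (g i) (V i)) := fun u =>
    ⟨fun i => φ i (u.1 i), by
      intro i j hij hle
      have hui : u.1 i = cosetMap (hV hij) (u.1 j) := (u.2 i j hij (hV hij)).symm
      obtain ⟨x, hx⟩ := QuotientGroup.mk_surjective (u.1 j)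
      show cosetMap hle (φ j (u.1 j)) = φ i (u.1 i)
      rw [hui, ← hx, cosetMap_mk, φmk, φmk, cosetMap_mk]
      refine mk_eq_mk_iff'.mpr ?_
      rw [mem_conjSubgroup]
      have hre : (g i)⁻¹ * ((x * (g j)⁻¹)⁻¹ * (x * (g i)⁻¹)) * g i = (g i)⁻¹ * g j := by group
      rw [hre]
      exact hc' i j hij⟩
  let finv : InvLim (fun i => conjSubgroup (g i) (V i)) → InvLim V := fun v =>
    ⟨fun i => ψ i (v.1 i), by
      intro i j hij hle
      have hvi : v.1 i = cosetMap (hP hij) (v.1 j) := (v.2 i j hij (hP hij)).symm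
      obtain ⟨x, hx⟩ := QuotientGroup.mk_surjective (v.1 j)
      show cosetMap hle (ψ j (v.1 j)) = ψ i (v.1 i)
      rw [hvi, ← hx, cosetMap_mk, ψmk, ψmk, cosetMap_mk]
      refine mk_eq_mk_iff'.mpr ?_
      have hre : (x * g j)⁻¹ * (x * g i) = (g j)⁻¹ * g i := by group
      rw [hre]
      exact hc i j hij⟩
  refine ⟨⟨⟨f, finv, ?_, ?_⟩, ?_, ?_⟩, ?_⟩
  · intro u
    refine Subtype.ext (funext fun i => ?_)
    obtain ⟨x, hx⟩ := QuotientGroup.mk_surjective (u.1 i)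
    show ψ i (φ i (u.1 i)) = u.1 i
    rw [← hx, φmk, ψmk, inv_mul_cancel_right]
  · intro v
    refine Subtype.ext (funext fun i => ?_)
    obtain ⟨x, hx⟩ := QuotientGroup.mk_surjective (v.1 i)
    show φ i (ψ i (v.1 i)) = v.1 i
    rw [← hx, ψmk, φmk, mul_inv_cancel_right]
  · exact continuous_invLim f id φ (fun u i => rfl)
  · exact continuous_invLim finv id ψ (fun v i => rfl)
  · intro g₀ u
    refine Subtype.ext (funext fun i => ?_)
    obtain ⟨x, hx⟩ := QuotientGroup.mk_surjective (u.1 i)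
    show φ i (g₀ • u.1 i) = g₀ • φ i (u.1 i)
    rw [← hx, smul_mk', φmk, φmk, smul_mk', mul_assoc]

lemma eqvHomeo_subseq (V : ℕ → Subgroup G) (hV : Antitone V) (a : ℕ → ℕ)
    (ha : StrictMono a) : EqvHomeo V (fun k => V (a k)) := by
  let f : InvLim V → InvLim (fun k => V (a k)) := fun u =>
    ⟨fun k => u.1 (a k), fun k l hkl hle => u.2 (a k) (a l) (ha.monotone hkl) hle⟩
  let finv : InvLim (fun k => V (a k)) → InvLim V := fun v =>
    ⟨fun i => cosetMap (hV (ha.le_apply : i ≤ a i)) (v.1 i), by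
      intro i j hij hle
      have h3 : V (a j) ≤ V (a i) := hV (ha.monotone hij)
      show cosetMap hle (cosetMap (hV ha.le_apply) (v.1 j))
          = cosetMap (hV ha.le_apply) (v.1 i)
      rw [cosetMap_comp, ← v.2 i j hij h3, cosetMap_comp]⟩
  refine ⟨⟨⟨f, finv, ?_, ?_⟩, ?_, ?_⟩, ?_⟩
  · intro u
    refine Subtype.ext (funext fun i => ?_)
    exact u.2 i (a i) ha.le_apply (hV ha.le_apply)
  · intro v
    refine Subtype.ext (funext fun k => ?_)
    exact v.2 k (a k) ha.le_apply (hV (ha.monotone ha.le_apply))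
  · exact continuous_invLim f a (fun _ => id) (fun u k => rfl)
  · exact continuous_invLim finv id
      (fun i => cosetMap (hV (ha.le_apply : i ≤ a i))) (fun v i => rfl)
  · intro g₀ u
    exact Subtype.ext (funext fun k => rfl)

lemma exists_cylinder {V : ℕ → Subgroup G} (hV : Antitone V) {s : Set (InvLim V)}
    (hs : IsOpen s) {x : InvLim V} (hx : x ∈ s) :
    ∃ i, ∀ u : InvLim V, u.1 i = x.1 i → u ∈ s := by
  obtain ⟨t, ht, hts⟩ := isOpen_induced_iff.mp hs
  rw [isOpen_pi_iff] at ht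
  obtain ⟨I, U, hU, hsub⟩ := ht x.1 (by rw [← hts] at hx; exact hx)
  refine ⟨I.sup id, fun u hu => ?_⟩
  rw [← hts]
  refine hsub fun j hj => ?_
  have hji : j ≤ I.sup id := Finset.le_sup (f := id) hj
  have huj : u.1 j = x.1 j := by
    rw [← u.2 j _ hji (hV hji), hu, x.2 j _ hji (hV hji)]
  rw [huj]
  exact (hU j hj).2


lemma conjSubgroup_index (g : G) (H : Subgroup G) : (conjSubgroup g H).index = H.index := by
  refine Subgroup.index_map_eq H (MulEquiv.surjective _) ?_
  rw [(MulAut.conj g).toMonoidHom.ker_eq_bot_iff.mpr (MulEquiv.injective _)]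
  exact bot_le

lemma conjSubgroup_finiteIndex (g : G) (H : Subgroup G) (h : H.FiniteIndex) :
    (conjSubgroup g H).FiniteIndex :=
  ⟨by rw [conjSubgroup_index]; exact h.index_ne_zero⟩

lemma conjSubgroup_top (g : G) : conjSubgroup g (⊤ : Subgroup G) = ⊤ :=
  Subgroup.map_top_of_surjective _ (MulEquiv.surjective _)

lemma GroupChain.lt_of_lt (C : GroupChain G) {m n : ℕ} (h : m < n) : C.sub n < C.sub m :=
  lt_of_le_of_lt (C.antitone h) (C.sub_lt m)

lemma forward_dir {Gc Hc : GroupChain G} (h : ChainConjEquiv Gc Hc) :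
    EqvHomeo Gc.sub Hc.sub := by
  obtain ⟨g, hcoh, Kc, a, b, ha, hb, hKa, hKb⟩ := h
  have hPanti : Antitone (fun i => conjSubgroup (g i) (Gc.sub i)) :=
    conj_antitone _ Gc.antitone g hcoh
  have e1 : EqvHomeo Gc.sub (fun i => conjSubgroup (g i) (Gc.sub i)) :=
    eqvHomeo_conj _ Gc.antitone g hcoh
  have e2 : EqvHomeo (fun i => conjSubgroup (g i) (Gc.sub i))
      (fun k => conjSubgroup (g (a k)) (Gc.sub (a k))) := eqvHomeo_subseq _ hPanti a ha
  have e3 : EqvHomeo Kc.sub (fun k => Kc.sub (2 * k)) :=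
    eqvHomeo_subseq _ Kc.antitone (fun k => 2 * k) (fun k l hkl => by simp only []; omega)
  have e4 : EqvHomeo Kc.sub (fun k => Kc.sub (2 * k + 1)) :=
    eqvHomeo_subseq _ Kc.antitone (fun k => 2 * k + 1) (fun k l hkl => by simp only []; omega)
  have e5 : EqvHomeo Hc.sub (fun k => Hc.sub (b k)) := eqvHomeo_subseq _ Hc.antitone b hb
  have c1 : EqvHomeo (fun k => conjSubgroup (g (a k)) (Gc.sub (a k)))
      (fun k => Kc.sub (2 * k)) := eqvHomeo_congr fun k => (hKa k).symm
  have c2 : EqvHomeo (fun k => Kc.sub (2 * k + 1)) (fun k => Hc.sub (b k)) :=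
    eqvHomeo_congr fun k => hKb k
  exact ((((((e1.trans e2).trans c1).trans e3.symm).trans e4).trans c2).trans e5.symm)


lemma backward_dir {Gc Hc : GroupChain G}
    (τ : InvLim Gc.sub ≃ₜ InvLim Hc.sub)
    (hτ : ∀ (g : G) (u : InvLim Gc.sub), τ (g • u) = g • τ u) :
    ChainConjEquiv Gc Hc := by
  classical
  -- equivariance of the inverse
  have hτs : ∀ (c : G) (v : InvLim Hc.sub), τ.symm (c • v) = c • τ.symm v := by
    intro c v
    apply τ.injective
    rw [Homeomorph.apply_symm_apply, hτ, Homeomorph.apply_symm_apply]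
  set x : InvLim Gc.sub := τ.symm (basepoint Hc.sub) with hxdef
  set g : ℕ → G := fun i => (x.1 i).out with hgdef
  have hg : ∀ i, (QuotientGroup.mk (g i) : G ⧸ Gc.sub i) = x.1 i :=
    fun i => QuotientGroup.out_eq' (x.1 i)
  have hcoh : ∀ i j, i ≤ j →
      (QuotientGroup.mk (g j) : G ⧸ Gc.sub i) = QuotientGroup.mk (g i) := by
    intro i j hij
    have h2 := x.2 i j hij (Gc.antitone hij)
    calc (QuotientGroup.mk (g j) : G ⧸ Gc.sub i)
        = cosetMap (Gc.antitone hij) (QuotientGroup.mk (g j) : G ⧸ Gc.sub j) :=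
          (cosetMap_mk _ _).symm
      _ = cosetMap (Gc.antitone hij) (x.1 j) := by rw [hg j]
      _ = x.1 i := h2
      _ = QuotientGroup.mk (g i) := (hg i).symm
  set P : ℕ → Subgroup G := fun i => conjSubgroup (g i) (Gc.sub i) with hPdef
  have hPanti : Antitone P := conj_antitone _ Gc.antitone g hcoh
  have hP0 : P 0 = ⊤ := by rw [hPdef]; simp only [Gc.sub_zero]; exact conjSubgroup_top _
  -- stabilizer characterizations
  have hst : ∀ (i : ℕ) (c : G), (c • x).1 i = x.1 i ↔ c ∈ P i := by
    intro i c
    rw [smul_coord, ← hg i, smul_mk', mk_eq_mk_iff', hPdef, mem_conjSubgroup]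
    have hre : (c * g i)⁻¹ * g i = ((g i)⁻¹ * c * g i)⁻¹ := by group
    rw [hre, inv_mem_iff]
  have hbp : ∀ (n : ℕ) (c : G),
      (c • basepoint Hc.sub).1 n = (basepoint Hc.sub).1 n ↔ c ∈ Hc.sub n := by
    intro n c
    rw [smul_coord]
    show c • (QuotientGroup.mk 1 : G ⧸ Hc.sub n) = QuotientGroup.mk 1 ↔ _
    rw [smul_mk', mul_one, mk_eq_mk_iff', mul_one, inv_mem_iff]
  -- cofinality from continuity of τ
  have hF2 : ∀ n, ∃ i, P i ≤ Hc.sub n := by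
    intro n
    have hopen : IsOpen {v : InvLim Hc.sub | v.1 n = (basepoint Hc.sub).1 n} := by
      have : Continuous fun v : InvLim Hc.sub => v.1 n :=
        (continuous_apply n).comp continuous_subtype_val
      exact this.isOpen_preimage {(basepoint Hc.sub).1 n} (isOpen_discrete _)
    have hxmem : x ∈ τ ⁻¹' {v : InvLim Hc.sub | v.1 n = (basepoint Hc.sub).1 n} := by
      show (τ x).1 n = (basepoint Hc.sub).1 n
      rw [hxdef, Homeomorph.apply_symm_apply]
    obtain ⟨i, hi⟩ := exists_cylinder Gc.antitone (hopen.preimage τ.continuous) hxmem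
    refine ⟨i, fun c hc => ?_⟩
    have h1 := hi (c • x) ((hst i c).mpr hc)
    have h2 : (τ (c • x)).1 n = (basepoint Hc.sub).1 n := h1
    rw [hτ c x, hxdef, Homeomorph.apply_symm_apply] at h2
    exact (hbp n c).mp h2
  have hF3 : ∀ i, ∃ n, Hc.sub n ≤ P i := by
    intro i
    have hopen : IsOpen {u : InvLim Gc.sub | u.1 i = x.1 i} := by
      have : Continuous fun u : InvLim Gc.sub => u.1 i :=
        (continuous_apply i).comp continuous_subtype_val
      exact this.isOpen_preimage {x.1 i} (isOpen_discrete _)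
    have hbmem : basepoint Hc.sub ∈ τ.symm ⁻¹' {u : InvLim Gc.sub | u.1 i = x.1 i} := by
      show (τ.symm (basepoint Hc.sub)).1 i = x.1 i
      rw [← hxdef]
    obtain ⟨n, hn⟩ :=
      exists_cylinder Hc.antitone (hopen.preimage τ.symm.continuous) hbmem
    refine ⟨n, fun c hc => ?_⟩
    have h1 := hn (c • basepoint Hc.sub) ((hbp n c).mpr hc)
    have h2 : (τ.symm (c • basepoint Hc.sub)).1 i = x.1 i := h1
    rw [hτs, ← hxdef] at h2
    exact (hst i c).mp h2
  -- strengthened cofinality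
  have hF2' : ∀ n m, ∃ i, m < i ∧ P i < Hc.sub n := by
    intro n m
    obtain ⟨i0, hi0⟩ := hF2 (n + 1)
    refine ⟨max i0 m + 1, by omega, ?_⟩
    exact lt_of_le_of_lt (le_trans (hPanti (by omega : i0 ≤ max i0 m + 1)) hi0)
      (Hc.sub_lt n)
  have hF3' : ∀ i m, ∃ n, m < n ∧ Hc.sub n < P i := by
    intro i m
    obtain ⟨n0, hn0⟩ := hF3 i
    refine ⟨max n0 m + 1, by omega, ?_⟩
    exact lt_of_lt_of_le
      (lt_of_le_of_lt (Hc.antitone (by omega : n0 + 1 ≤ max n0 m + 1)) (Hc.sub_lt n0)) hn0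
  -- recursive construction of the interleaved chain indices
  set q : ℕ → ℕ × ℕ := fun k =>
    Nat.rec (0, Classical.choose (hF3' 0 0))
      (fun _ p =>
        (Classical.choose (hF2' p.2 p.1),
         Classical.choose (hF3' (Classical.choose (hF2' p.2 p.1)) p.2))) k with hqdef
  have hA : ∀ k, (q k).1 < (q (k + 1)).1 ∧ P ((q (k + 1)).1) < Hc.sub ((q k).2) :=
    fun k => Classical.choose_spec (hF2' ((q k).2) ((q k).1))
  have hB : ∀ k, (q k).2 < (q (k + 1)).2 ∧ Hc.sub ((q (k + 1)).2) < P ((q (k + 1)).1) :=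
    fun k => Classical.choose_spec (hF3' ((q (k + 1)).1) ((q k).2))
  have hInv : ∀ k, Hc.sub ((q k).2) < P ((q k).1) := by
    intro k
    cases k with
    | zero =>
      have h0 := Classical.choose_spec (hF3' 0 0)
      exact h0.2
    | succ k => exact (hB k).2
  -- the interleaved chain
  set Ks : ℕ → Subgroup G := fun m =>
    if m % 2 = 0 then P ((q (m / 2)).1) else Hc.sub ((q (m / 2)).2) with hKsdef
  have hKeven : ∀ k, Ks (2 * k) = P ((q k).1) := by
    intro k
    have h1 : (2 * k) % 2 = 0 := by omega
    have h2 : (2 * k) / 2 = k := by omega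
    simp only [hKsdef, h1, h2]
    simp
  have hKodd : ∀ k, Ks (2 * k + 1) = Hc.sub ((q k).2) := by
    intro k
    have h1 : (2 * k + 1) % 2 = 1 := by omega
    have h2 : (2 * k + 1) / 2 = k := by omega
    simp only [hKsdef, h1, h2]
    norm_num
  have hKlt : ∀ m, Ks (m + 1) < Ks m := by
    intro m
    rcases Nat.even_or_odd m with ⟨k, hk⟩ | ⟨k, hk⟩
    · have hm : m = 2 * k := by omega
      rw [hm, hKeven k, show 2 * k + 1 = 2 * k + 1 from rfl, hKodd k]
      exact hInv k
    · have hm : m = 2 * k + 1 := by omega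
      rw [hm, hKodd k, show 2 * k + 1 + 1 = 2 * (k + 1) from by ring, hKeven (k + 1)]
      exact (hA k).2
  have hKfin : ∀ m, (Ks m).FiniteIndex := by
    intro m
    rcases Nat.even_or_odd m with ⟨k, hk⟩ | ⟨k, hk⟩
    · have hm : m = 2 * k := by omega
      rw [hm, hKeven k]
      exact conjSubgroup_finiteIndex _ _ (Gc.finiteIndex _)
    · have hm : m = 2 * k + 1 := by omega
      rw [hm, hKodd k]
      exact Hc.finiteIndex _
  have hq01 : (q 0).1 = 0 := rfl
  refine ⟨g, hcoh, ⟨Ks, ?_, hKlt, hKfin⟩, fun k => (q k).1, fun k => (q k).2,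
    strictMono_nat_of_lt_succ (fun k => (hA k).1),
    strictMono_nat_of_lt_succ (fun k => (hB k).1), ?_, ?_⟩
  · show Ks 0 = ⊤
    have : Ks 0 = P ((q 0).1) := by simpa using hKeven 0
    rw [this, hq01, hP0]
  · intro k
    show Ks (2 * k) = conjSubgroup (g ((q k).1)) (Gc.sub ((q k).1))
    rw [hKeven k]
  · intro k
    show Ks (2 * k + 1) = Hc.sub ((q k).2)
    rw [hKodd k]

end CantorChains



namespace CantorChains

/-- Two group chains are conjugate equivalent if and only if there is a
`G`-equivariant homeomorphism between their inverse limits (not necessarily preserving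
the basepoints). -/
theorem chainConjEquiv_iff_equivariant_homeo {G : Type*} [Group G]
    (Gc Hc : GroupChain G) :
    ChainConjEquiv Gc Hc ↔
      ∃ τ : InvLim Gc.sub ≃ₜ InvLim Hc.sub,
        ∀ (g : G) (u : InvLim Gc.sub), τ (g • u) = g • τ u := by
  constructor
  · intro h
    obtain ⟨τ, hτ⟩ := forward_dir h
    exact ⟨τ, hτ⟩
  · rintro ⟨τ, hτ⟩
    exact backward_dir τ hτ

end CantorChains
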